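/- Let a, b ∈ k with a ≠ 0 and suppose the polynomial f = X³ − aX − b is irreducible over k; let K₃ ⊆ k̄ be its splitting field and set v = 4a³ − 27b² (which is nonzero). Let u ∈ k* be such that ℍ[k,u,−3v] ≅ M₂(k). Then there exists z ∈ k such that K₃ is the splitting field over k of the polynomial X³ − (3u/4)X − z/4. -/

import Mathlib

open Polynomial Quaternion IntermediateField

lemma roots_mem_of_normal {k L : Type*} [Field k] [Field L] [Algebra k L]
    (E : IntermediateField k L) [Normal k E] {t : L} (ht : t ∈ E) {r : L}
    (hr : aeval r (minpoly k t) = 0) : r ∈ E := by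
  set t' : E := ⟨t, ht⟩ with ht'
  have hco : algebraMap E L t' = t := rfl
  have h1 : minpoly k t = minpoly k t' := by
    rw [← hco, minpoly.algebraMap_eq (algebraMap E L).injective]
  have hint : IsIntegral k t' := ((inferInstance : Normal k E).isIntegral t')
  have hsp : Splits ((minpoly k t').map (algebraMap k E)) := Normal.splits inferInstance t'
  have hrs : r ∈ (minpoly k t').rootSet L := by
    rw [mem_rootSet]
    exact ⟨minpoly.ne_zero hint, by rw [← h1]; exact hr⟩
  rw [← hsp.image_rootSet E.val] at hrs
  obtain ⟨s, _, rfl⟩ := hrs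
  exact s.2

/-- Let `f = X³ − aX − b` (with `a ≠ 0`) be irreducible over a perfect field `k` of
characteristic `≠ 2, 3`, with splitting field `K₃ ⊆ k̄` and discriminant-related quantity
`v = 4a³ − 27b²` (nonzero).  If `u ∈ k*` is such that `ℍ[k, u, −3v]` is split, then `K₃`
is also the splitting field over `k` of a polynomial `X³ − (3u/4)X − z/4` for some `z ∈ k`. -/
theorem cubic_splitting_field_of_quaternion_split {k : Type*} [Field k] [PerfectField k]
    (hchar2 : (2 : k) ≠ 0) (hchar3 : (3 : k) ≠ 0)
    (a b : k) (ha : a ≠ 0) (hirr : Irreducible (X ^ 3 - C a * X - C b))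
    (u : k) (hu : u ≠ 0)
    (hsplit : Nonempty (ℍ[k, u, -3 * (4 * a ^ 3 - 27 * b ^ 2)] ≃ₐ[k]
        Matrix (Fin 2) (Fin 2) k)) :
    4 * a ^ 3 - 27 * b ^ 2 ≠ 0 ∧
      ∃ z : k,
        IntermediateField.adjoin k
            ((X ^ 3 - C (3 * u / 4) * X - C (z / 4)).rootSet (AlgebraicClosure k)) =
          IntermediateField.adjoin k
            ((X ^ 3 - C a * X - C b).rootSet (AlgebraicClosure k)) := by
  set f : k[X] := X ^ 3 - C a * X - C b with hf
  have hfdeg : f.natDegree = 3 := by rw [hf]; compute_degree!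
  have hfmonic : f.Monic := by rw [hf]; monicity!
  have hf0 : f ≠ 0 := hfmonic.ne_zero
  have hnoroot : ∀ r : k, r ^ 3 - a * r - b ≠ 0 := by
    intro r hr
    have hroot : f.IsRoot r := by
      rw [hf]; simp [IsRoot]; linear_combination hr
    obtain ⟨q, hq⟩ := Polynomial.dvd_iff_isRoot.2 hroot
    rcases hirr.isUnit_or_isUnit hq with h | h
    · exact Polynomial.not_isUnit_X_sub_C r h
    · have hq0 : q ≠ 0 := by
        intro h0; rw [h0, mul_zero] at hq; exact hf0 hq
      have : f.natDegree = 1 := by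
        rw [hq, Polynomial.natDegree_mul (Polynomial.X_sub_C_ne_zero r) hq0,
          Polynomial.natDegree_X_sub_C, Polynomial.natDegree_eq_zero_of_isUnit h]
      rw [hfdeg] at this; exact (by norm_num : (3:ℕ) ≠ 1) this
  have hv : 4 * a ^ 3 - 27 * b ^ 2 ≠ 0 := by
    intro h
    apply hnoroot (-(3 * b) / (2 * a))
    field_simp
    linear_combination b * h
  refine ⟨hv, ?_⟩
  set v : k := 4 * a ^ 3 - 27 * b ^ 2 with hvdef
  -- Step 1: extract a norm representation of u from the split quaternion algebra
  have hU : ∃ s t : k, u = s ^ 2 + 3 * v * t ^ 2 := by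
    have hd : (-3 * v : k) ≠ 0 := mul_ne_zero (neg_ne_zero.2 hchar3) hv
    by_cases hsq : ∃ σ : k, σ ^ 2 = -3 * v
    · obtain ⟨σ, hσ⟩ := hsq
      have hσ0 : σ ≠ 0 := by
        intro h; rw [h] at hσ; exact hd (by linear_combination -hσ)
      refine ⟨(u + 1) / 2, (u - 1) / (2 * σ), ?_⟩
      field_simp
      linear_combination (-(u - 1)^2) * hσ
    · obtain ⟨φ⟩ := hsplit
      set M : Matrix (Fin 2) (Fin 2) k :=
        Matrix.single (0 : Fin 2) (1 : Fin 2) (1 : k) with hM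
      set ε : ℍ[k, u, -3 * v] := φ.symm M with hε
      have hM2 : M * M = 0 :=
        Matrix.single_mul_single_of_ne (1 : k) (0 : Fin 2) (1 : Fin 2) (0 : Fin 2)
          (by decide : (1 : Fin 2) ≠ (0 : Fin 2)) (1 : k)
      have hε2 : ε * ε = 0 := by
        rw [hε, ← map_mul, hM2, map_zero]
      have hε0 : ε ≠ 0 := by
        intro h
        have hM0 : M = 0 := by
          have := congrArg φ h
          rwa [hε, AlgEquiv.apply_symm_apply, map_zero] at this
        have h01 : M 0 1 = 1 := Matrix.single_apply_same 0 1 1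
        rw [hM0] at h01
        simp at h01
      set x0 := ε.re with hx0d
      set x1 := ε.imI with hx1d
      set x2 := ε.imJ with hx2d
      set x3 := ε.imK with hx3d
      have hre : x0 * x0 + u * x1 * x1 + (-3*v) * x2 * x2 - u * (-3*v) * x3 * x3 = 0 := by
        have := congrArg QuaternionAlgebra.re hε2
        simpa using this
      have himI : x0 * x1 + x1 * x0 - (-3*v) * x2 * x3 + (-3*v) * x3 * x2 = 0 := by
        have := congrArg QuaternionAlgebra.imI hε2
        simpa using this
      have himJ : x0 * x2 + u * x1 * x3 + x2 * x0 - u * x3 * x1 = 0 := by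
        have := congrArg QuaternionAlgebra.imJ hε2
        simpa using this
      have himK : x0 * x3 + x1 * x2 - x2 * x1 + x3 * x0 = 0 := by
        have := congrArg QuaternionAlgebra.imK hε2
        simpa using this
      have hx0 : x0 = 0 := by
        by_contra hx0
        have h1 : x1 = 0 := by
          have : 2 * x0 * x1 = 0 := by linear_combination himI
          rcases mul_eq_zero.1 this with h | h
          · rcases mul_eq_zero.1 h with h | h
            · exact absurd h hchar2
            · exact absurd h hx0
          · exact h
        have h2 : x2 = 0 := by
          have : 2 * x0 * x2 = 0 := by linear_combination himJ
          rcases mul_eq_zero.1 this with h | h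
          · rcases mul_eq_zero.1 h with h | h
            · exact absurd h hchar2
            · exact absurd h hx0
          · exact h
        have h3 : x3 = 0 := by
          have : 2 * x0 * x3 = 0 := by linear_combination himK
          rcases mul_eq_zero.1 this with h | h
          · rcases mul_eq_zero.1 h with h | h
            · exact absurd h hchar2
            · exact absurd h hx0
          · exact h
        have : x0 * x0 = 0 := by
          linear_combination hre - u*x1*h1 + 3*v*x2*h2 - 3*u*v*x3*h3
        exact hx0 (by rcases mul_eq_zero.1 this with h | h <;> exact h)
      have hmain : u * x1^2 - 3*v * x2^2 + 3 * u * v * x3^2 = 0 := by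
        linear_combination hre - x0 * hx0
      set n := x1^2 + 3*v*x3^2 with hn
      by_cases hn0 : n = 0
      · by_cases hx3 : x3 = 0
        · have h1 : x1 = 0 := by
            have : x1^2 = 0 := by rw [hn] at hn0; linear_combination hn0 - 3*v*x3*hx3
            exact pow_eq_zero_iff (n := 2) (by norm_num) |>.1 this
          have h2 : x2 = 0 := by
            have h2' : 3 * v * x2^2 = 0 := by
              linear_combination -hmain + u*x1*h1 + 3*u*v*x3*hx3
            rcases mul_eq_zero.1 h2' with h | h
            · rcases mul_eq_zero.1 h with h | h
              · exact absurd h hchar3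
              · exact absurd h hv
            · exact pow_eq_zero_iff (n := 2) (by norm_num) |>.1 h
          exact absurd (QuaternionAlgebra.ext (hx0d ▸ hx0 : ε.re = 0) (hx1d ▸ h1)
            (hx2d ▸ h2) (hx3d ▸ hx3) : ε = (0 : ℍ[k, u, -3*v])) hε0
        · exfalso
          apply hsq
          refine ⟨x1 / x3, ?_⟩
          rw [hn] at hn0
          field_simp
          linear_combination hn0
      · refine ⟨(-3*v)*x2*x3/n, x2*x1/n, ?_⟩
        field_simp
        linear_combination (x1^2 + 3*v*x3^2) * hmain
  obtain ⟨s, t, hst⟩ := hU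
  rw [hvdef] at hst
  -- Step 2: witnesses for the trace-form representation
  have h4 : (4:k) ≠ 0 := by
    intro h4
    apply hchar2
    have h22 : (2:k)*2 = 0 := by linear_combination h4
    rcases mul_eq_zero.1 h22 with h | h <;> exact h
  have h9 : (9:k) ≠ 0 := by
    intro h9
    apply hchar3
    have h33 : (3:k)*3 = 0 := by linear_combination h9
    rcases mul_eq_zero.1 h33 with h | h <;> exact h
  obtain ⟨x, hxdef⟩ : ∃ x : k, x = -3*a*t := ⟨_, rfl⟩
  obtain ⟨w, hwdef⟩ : ∃ w : k, w = 9*b*t + s := ⟨_, rfl⟩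
  obtain ⟨y, hydef⟩ : ∃ y : k, y = (27*b*t + 3*s) / (2*a) := ⟨_, rfl⟩
  have hy2a : 2*a*y = 27*b*t + 3*s := by
    rw [hydef]; field_simp
  have hrel : 3*w = 2*a*y := by
    rw [hwdef]; linear_combination -hy2a
  have hC3 : 4*a*x^2 + 12*b*x*y + 2*a*w*y = 3*u := by
    rw [hxdef, hwdef]
    linear_combination (s - 9*b*t)*hy2a - 3*hst
  have hD : x^3 - a*x*y^2 - b*y^3 ≠ 0 := by
    intro hD0
    by_cases hy : y = 0
    · have hx : x = 0 := by
        have : x^3 = 0 := by linear_combination hD0 + a*x*y*hy + b*y^2*hy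
        exact pow_eq_zero_iff (n := 3) (by norm_num) |>.1 this
      have h3u : 3*u = 0 := by
        rw [← hC3, hx, hy]; ring
      exact hu ((mul_eq_zero.1 h3u).resolve_left hchar3)
    · apply hnoroot (x / y)
      field_simp
      linear_combination hD0
  -- Step 3: pass to the algebraic closure
  set L := AlgebraicClosure k with hL
  have hf0' : f ≠ 0 := hf0
  obtain ⟨θ, hθ0⟩ := IsAlgClosed.exists_aeval_eq_zero L f
    (by rw [Polynomial.degree_eq_natDegree hf0, hfdeg]; exact (by norm_num))
  have hθ : θ ^ 3 = algebraMap k L a * θ + algebraMap k L b := by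
    rw [hf] at hθ0
    simp only [map_sub, map_mul, map_pow, aeval_X, aeval_C] at hθ0
    linear_combination hθ0
  have hmin : minpoly k θ = f :=
    (minpoly.eq_of_irreducible_of_monic hirr hθ0 hfmonic).symm
  have hintθ : IsIntegral k θ := ⟨f, hfmonic, by rwa [← aeval_def]⟩
  -- mapped hypotheses
  have hC3L := congrArg (algebraMap k L) hC3
  have hWL := congrArg (algebraMap k L) hrel
  simp only [map_add, map_mul, map_pow, map_ofNat] at hC3L hWL
  -- the element ξ
  obtain ⟨ξ, hξdef⟩ : ∃ ξ : L,
      ξ = algebraMap k L x * θ + algebraMap k L y * θ^2 - algebraMap k L w := ⟨_, rfl⟩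
  obtain ⟨z, hzdef⟩ : ∃ z : k,
      z = 3*u*w + 4*b^2*y^3 - 4*w^3 - 4*a*b*x*y^2 + 4*b*x^3 := ⟨_, rfl⟩
  refine ⟨z, ?_⟩
  set g : k[X] := X ^ 3 - C (3 * u / 4) * X - C (z / 4) with hg
  have hgdeg : g.natDegree = 3 := by rw [hg]; compute_degree!
  have hgmonic : g.Monic := by rw [hg]; monicity!
  have hg0 : g ≠ 0 := hgmonic.ne_zero
  have hξ3 : 4*ξ^3 = 3*algebraMap k L u*ξ +
      (3*algebraMap k L u*algebraMap k L w + 4*algebraMap k L b^2*algebraMap k L y^3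
        - 4*algebraMap k L w^3
        - 4*algebraMap k L a*algebraMap k L b*algebraMap k L x*algebraMap k L y^2
        + 4*algebraMap k L b*algebraMap k L x^3) := by
    rw [hξdef]
    linear_combination (4*algebraMap k L y^3*θ^3 + 12*algebraMap k L x*algebraMap k L y^2*θ^2
        + (4*algebraMap k L a*algebraMap k L y^3 + 12*algebraMap k L x^2*algebraMap k L y
          - 12*algebraMap k L y^2*algebraMap k L w)*θ
        + 4*algebraMap k L x^3 + 12*algebraMap k L a*algebraMap k L x*algebraMap k L y^2
        - 24*algebraMap k L x*algebraMap k L y*algebraMap k L w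
        + 4*algebraMap k L y^3*algebraMap k L b) * hθ
      + (algebraMap k L x*θ + algebraMap k L y*θ^2) * hC3L
      + (4*algebraMap k L w*algebraMap k L y*θ^2 - 2*algebraMap k L a*algebraMap k L y^2*θ^2
        - 4*algebraMap k L b*algebraMap k L y^2*θ + 4*algebraMap k L w*algebraMap k L x*θ
        - 6*algebraMap k L a*algebraMap k L x*algebraMap k L y*θ
        - 4*algebraMap k L x^2*θ^2 - 8*algebraMap k L b*algebraMap k L x*algebraMap k L y ) * hWL
  have h4L : (4:L) ≠ 0 := by
    intro h
    apply h4
    have h40 : algebraMap k L 4 = algebraMap k L 0 := by rw [map_ofNat, map_zero]; exact h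
    exact (algebraMap k L).injective h40
  have hq1 : (4:L) * algebraMap k L (3*u/4) = 3 * algebraMap k L u := by
    have hk : (4:k) * (3*u/4) = 3*u := by field_simp
    rw [← map_ofNat (algebraMap k L) 4, ← map_mul, hk, map_mul, map_ofNat]
  have hq2 : (4:L) * algebraMap k L (z/4) = algebraMap k L z := by
    have hk : (4:k) * (z/4) = z := by field_simp
    rw [← map_ofNat (algebraMap k L) 4, ← map_mul, hk]
  have hZL : algebraMap k L z = 3*algebraMap k L u*algebraMap k L w
      + 4*algebraMap k L b^2*algebraMap k L y^3 - 4*algebraMap k L w^3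
      - 4*algebraMap k L a*algebraMap k L b*algebraMap k L x*algebraMap k L y^2
      + 4*algebraMap k L b*algebraMap k L x^3 := by
    rw [hzdef]
    simp only [map_add, map_sub, map_mul, map_pow, map_ofNat]
  have hgξ : aeval ξ g = 0 := by
    have hae : aeval ξ g = ξ^3 - algebraMap k L (3*u/4) * ξ - algebraMap k L (z/4) := by
      rw [hg]
      simp only [map_sub, map_mul, map_pow, aeval_X, aeval_C]
    have hmul : (4:L) * (ξ^3 - algebraMap k L (3*u/4) * ξ - algebraMap k L (z/4)) = 0 := by
      linear_combination hξ3 - ξ*hq1 - hq2 - hZL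
    rw [hae]
    exact (mul_eq_zero.1 hmul).resolve_left h4L
  have hintξ : IsIntegral k ξ := ⟨g, hgmonic, by rwa [← aeval_def]⟩
  -- θ is recovered from ξ
  have h9DL : algebraMap k L (9*x^3 - 9*a*x*y^2 - 9*b*y^3) ≠ 0 := by
    intro h
    have : (9*x^3 - 9*a*x*y^2 - 9*b*y^3 : k) = 0 :=
      (algebraMap k L).injective (by rw [h, map_zero])
    apply hD
    have h9' : (9:k) * (x^3 - a*x*y^2 - b*y^3) = 0 := by linear_combination this
    exact (mul_eq_zero.1 h9').resolve_left h9
  have hDθ : algebraMap k L (9*x^3 - 9*a*x*y^2 - 9*b*y^3) * θ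
      = algebraMap k L (6*a*x^2*y + 2*a^2*y^3 + 18*b*x*y^2)
        + algebraMap k L (9*x^2 - 3*a*y^2) * ξ - algebraMap k L (9*y) * ξ^2 := by
    rw [hξdef]
    simp only [map_add, map_sub, map_mul, map_pow, map_ofNat]
    linear_combination (9*algebraMap k L y^3*θ + 18*algebraMap k L x*algebraMap k L y^2) * hθ
      + (3*algebraMap k L y*algebraMap k L w - 6*algebraMap k L y^2*θ^2
        + algebraMap k L a*algebraMap k L y^2 - 6*algebraMap k L x*algebraMap k L y*θ
        + 3*algebraMap k L x^2) * hWL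
  have hθmem : ∀ E : IntermediateField k L, ξ ∈ E → θ ∈ E := by
    intro E hE
    have hkey : θ = (algebraMap k L (9*x^3 - 9*a*x*y^2 - 9*b*y^3))⁻¹
        * (algebraMap k L (6*a*x^2*y + 2*a^2*y^3 + 18*b*x*y^2)
          + algebraMap k L (9*x^2 - 3*a*y^2) * ξ - algebraMap k L (9*y) * ξ^2) := by
      rw [← hDθ, inv_mul_cancel_left₀ h9DL]
    rw [hkey, ← map_inv₀]
    exact mul_mem (IntermediateField.algebraMap_mem E _)
      (sub_mem (add_mem (IntermediateField.algebraMap_mem E _) (mul_mem (IntermediateField.algebraMap_mem E _) hE))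
        (mul_mem (IntermediateField.algebraMap_mem E _) (pow_mem hE 2)))
  have hξmemθ : ξ ∈ k⟮θ⟯ := by
    rw [hξdef]
    exact sub_mem
      (add_mem (mul_mem (IntermediateField.algebraMap_mem _ x) (mem_adjoin_simple_self k θ))
        (mul_mem (IntermediateField.algebraMap_mem _ y) (pow_mem (mem_adjoin_simple_self k θ) 2)))
      (IntermediateField.algebraMap_mem _ w)
  have hEq : k⟮ξ⟯ = k⟮θ⟯ :=
    le_antisymm (adjoin_simple_le_iff.2 hξmemθ)
      (adjoin_simple_le_iff.2 (hθmem _ (mem_adjoin_simple_self k ξ)))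
  have hPdeg : (minpoly k ξ).natDegree = 3 := by
    have h1 := IntermediateField.adjoin.finrank hintξ
    have h2 := IntermediateField.adjoin.finrank hintθ
    rw [hmin, hfdeg] at h2
    rw [← h1, hEq, h2]
  have hPg : minpoly k ξ = g := by
    have hdvd : minpoly k ξ ∣ g := minpoly.dvd k ξ hgξ
    exact (Polynomial.eq_of_monic_of_dvd_of_natDegree_le (minpoly.monic hintξ) hgmonic hdvd
      (by rw [hgdeg, hPdeg])).symm
  -- Step 4: compare splitting fields
  haveI hsF : IsSplittingField k (adjoin k (f.rootSet L)) f :=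
    adjoin_rootSet_isSplittingField (IsAlgClosed.splits (f.map (algebraMap k L)))
  haveI hsG : IsSplittingField k (adjoin k (g.rootSet L)) g :=
    adjoin_rootSet_isSplittingField (IsAlgClosed.splits (g.map (algebraMap k L)))
  haveI : Normal k (adjoin k (f.rootSet L)) := Normal.of_isSplittingField f
  haveI : Normal k (adjoin k (g.rootSet L)) := Normal.of_isSplittingField g
  have hθF : θ ∈ adjoin k (f.rootSet L) :=
    subset_adjoin _ _ (by rw [mem_rootSet]; exact ⟨hf0, hθ0⟩)
  have hξG : ξ ∈ adjoin k (g.rootSet L) :=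
    subset_adjoin _ _ (by rw [mem_rootSet]; exact ⟨hg0, hgξ⟩)
  have hξF : ξ ∈ adjoin k (f.rootSet L) := by
    rw [hξdef]
    exact sub_mem
      (add_mem (mul_mem (IntermediateField.algebraMap_mem _ x) hθF)
        (mul_mem (IntermediateField.algebraMap_mem _ y) (pow_mem hθF 2)))
      (IntermediateField.algebraMap_mem _ w)
  have hθG : θ ∈ adjoin k (g.rootSet L) := hθmem _ hξG
  refine le_antisymm ?_ ?_
  · rw [adjoin_le_iff]
    intro r hr
    rw [mem_rootSet] at hr
    exact roots_mem_of_normal _ hξF (by rw [hPg]; exact hr.2)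
  · rw [adjoin_le_iff]
    intro r hr
    rw [mem_rootSet] at hr
    exact roots_mem_of_normal _ hθG (by rw [hmin]; exact hr.2)
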